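/- For every N > 0 there exist λ ∈ ℕ, a finite set I = {k ∈ ℤ² : k₁² + k₂² = λ}, and complex coefficients (μ_k)_{k∈I} not all zero, such that the trigonometric polynomial f(x) = ∑_{k∈I} μ_k e^{i k·x} on ℝ² has all partial derivatives D^α f(0) = 0 for every multi-index α with |α|₁ ≤ N. -/

import Mathlib

/-- Partial derivative in the `i`-th coordinate direction. -/
noncomputable def pderiv' (d : ℕ) (i : Fin d) (g : EuclideanSpace ℝ (Fin d) → ℂ) :
    EuclideanSpace ℝ (Fin d) → ℂ :=
  fun x => fderiv ℝ g x (EuclideanSpace.single i 1)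

/-- The iterated partial derivative `D^α = ∂₁^{α₁} ⋯ ∂_d^{α_d}`. -/
noncomputable def Dalpha (d : ℕ) (α : Fin d → ℕ) (g : EuclideanSpace ℝ (Fin d) → ℂ) :
    EuclideanSpace ℝ (Fin d) → ℂ :=
  (List.ofFn (fun i => (pderiv' d i)^[α i])).foldr (· ∘ ·) id g

namespace Stmt9Aux

open Complex Finset

abbrev E2 := EuclideanSpace ℝ (Fin 2)

noncomputable def LL (c : Fin 2 → ℂ) : E2 →L[ℝ] ℂ :=
  c 0 • (Complex.ofRealCLM.comp (EuclideanSpace.proj 0)) +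
  c 1 • (Complex.ofRealCLM.comp (EuclideanSpace.proj 1))

lemma LL_apply (c : Fin 2 → ℂ) (x : E2) : LL c x = c 0 * x 0 + c 1 * x 1 := by
  simp [LL]

lemma LL_single (c : Fin 2 → ℂ) (i : Fin 2) : LL c (EuclideanSpace.single i 1) = c i := by
  fin_cases i <;> simp [LL, EuclideanSpace.single_apply]

lemma hasFDerivAt_term (c : ℂ) (L : E2 →L[ℝ] ℂ) (x : E2) :
    HasFDerivAt (fun x => c * Complex.exp (L x)) ((c * Complex.exp (L x)) • L) x := by
  have h1 : HasFDerivAt (fun x : E2 => Complex.exp (L x)) (Complex.exp (L x) • L) x :=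
    (Complex.hasDerivAt_exp (L x)).comp_hasFDerivAt x L.hasFDerivAt
  have := h1.const_mul c
  simpa [smul_smul] using this

noncomputable def F (I : Finset (ℤ × ℤ)) (c : ℤ × ℤ → ℂ) (L : ℤ × ℤ → E2 →L[ℝ] ℂ) : E2 → ℂ :=
  fun x => ∑ k ∈ I, c k * Complex.exp (L k x)

lemma pderiv'_F (I : Finset (ℤ × ℤ)) (c : ℤ × ℤ → ℂ) (L : ℤ × ℤ → E2 →L[ℝ] ℂ) (i : Fin 2) :
    pderiv' 2 i (F I c L) = F I (fun k => c k * L k (EuclideanSpace.single i 1)) L := by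
  funext x
  have h : HasFDerivAt (F I c L) (∑ k ∈ I, (c k * Complex.exp (L k x)) • L k) x :=
    HasFDerivAt.fun_sum fun k _ => hasFDerivAt_term (c k) (L k) x
  simp only [pderiv', h.fderiv, ContinuousLinearMap.sum_apply, ContinuousLinearMap.smul_apply, F]
  exact Finset.sum_congr rfl fun k _ => by simp [smul_eq_mul]; ring

lemma iter_pderiv'_F (I : Finset (ℤ × ℤ)) (c : ℤ × ℤ → ℂ) (L : ℤ × ℤ → E2 →L[ℝ] ℂ) (i : Fin 2)
    (n : ℕ) :
    (pderiv' 2 i)^[n] (F I c L) =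
      F I (fun k => c k * (L k (EuclideanSpace.single i 1)) ^ n) L := by
  induction n with
  | zero => simp [F]
  | succ n ih =>
      rw [Function.iterate_succ_apply', ih, pderiv'_F]
      funext x
      simp only [F]
      exact Finset.sum_congr rfl fun k _ => by ring

lemma Dalpha_F (I : Finset (ℤ × ℤ)) (c : ℤ × ℤ → ℂ) (L : ℤ × ℤ → E2 →L[ℝ] ℂ) (α : Fin 2 → ℕ) :
    Dalpha 2 α (F I c L) 0 =
      ∑ k ∈ I, c k * (L k (EuclideanSpace.single 1 1)) ^ (α 1)
        * (L k (EuclideanSpace.single 0 1)) ^ (α 0) := by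
  have : Dalpha 2 α (F I c L) = (pderiv' 2 0)^[α 0] ((pderiv' 2 1)^[α 1] (F I c L)) := by
    simp [Dalpha, List.ofFn_succ]
  rw [this, iter_pderiv'_F, iter_pderiv'_F]
  simp [F, mul_assoc]

/-! ### Lattice points on circles via Gaussian integers -/

def zg : GaussianInt := ⟨2, 1⟩
def wg : GaussianInt := ⟨2, -1⟩

lemma norm_zg : Zsqrtd.norm zg = 5 := by decide
lemma norm_wg : Zsqrtd.norm wg = 5 := by decide

lemma pow34 (m : ℕ) (hm : 0 < m) :
    ((⟨3, 4⟩ : GaussianInt) ^ m).re % 5 = 3 ∧ ((⟨3, 4⟩ : GaussianInt) ^ m).im % 5 = 4 := by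
  induction m with
  | zero => omega
  | succ n ih =>
      rcases Nat.eq_zero_or_pos n with h | h
      · subst h; decide
      · obtain ⟨h1, h2⟩ := ih h
        rw [pow_succ]
        constructor
        · simp only [Zsqrtd.re_mul]
          omega
        · simp only [Zsqrtd.im_mul]
          omega

lemma zg_pow_ne_wg_pow (m : ℕ) (hm : 0 < m) : zg ^ m ≠ wg ^ m := by
  intro h
  have hz2 : zg * zg = ⟨3, 4⟩ := by decide
  have hzw : zg * wg = (5 : GaussianInt) := by decide
  have : (⟨3, 4⟩ : GaussianInt) ^ m = (5 : GaussianInt) ^ m := by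
    calc (⟨3, 4⟩ : GaussianInt) ^ m = (zg * zg) ^ m := by rw [hz2]
    _ = zg ^ m * zg ^ m := by rw [mul_pow]
    _ = zg ^ m * wg ^ m := by rw [← h]
    _ = (zg * wg) ^ m := by rw [mul_pow]
    _ = (5 : GaussianInt) ^ m := by rw [hzw]
  have h4 := (pow34 m hm).2
  rw [this] at h4
  have : ((5 : GaussianInt) ^ m).im = 0 := by
    have : ((5 : GaussianInt) ^ m) = ((5 ^ m : ℤ) : GaussianInt) := by push_cast; ring
    rw [this, Zsqrtd.im_intCast]
  omega

noncomputable def pt (C a : ℕ) : GaussianInt := zg ^ a * wg ^ (C - a)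

lemma pt_inj (C : ℕ) : Set.InjOn (pt C) (Finset.range (C + 1)) := by
  intro a ha b hb hab
  simp only [Finset.coe_range, Set.mem_Iio] at ha hb
  by_contra hne
  wlog hlt : a < b generalizing a b
  · exact this hab.symm hb ha (Ne.symm hne) (by omega)
  have hz : zg ≠ 0 := by decide
  have hw : wg ≠ 0 := by decide
  have hCa : C - a = (b - a) + (C - b) := by omega
  have : zg ^ a * (wg ^ (b - a) * wg ^ (C - b)) = zg ^ a * (zg ^ (b - a) * wg ^ (C - b)) := by
    have := hab
    unfold pt at this
    rw [hCa, pow_add] at this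
    rw [this, ← mul_assoc, ← pow_add]
    congr 2
    omega
  have h2 : wg ^ (b - a) = zg ^ (b - a) := by
    have := mul_left_cancel₀ (pow_ne_zero a hz) this
    exact mul_right_cancel₀ (pow_ne_zero _ hw) this
  exact zg_pow_ne_wg_pow (b - a) (by omega) h2.symm

lemma pt_norm (C a : ℕ) (ha : a ≤ C) : (pt C a).re ^ 2 + (pt C a).im ^ 2 = 5 ^ C := by
  have h1 : (pt C a).norm = 5 ^ C := by
    unfold pt
    have npow : ∀ (x : GaussianInt) (n : ℕ), Zsqrtd.norm (x ^ n) = Zsqrtd.norm x ^ n := by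
      intro x n
      induction n with
      | zero => simp [Zsqrtd.norm_one]
      | succ n ih => rw [pow_succ, Zsqrtd.norm_mul, ih, pow_succ]
    rw [Zsqrtd.norm_mul, npow, npow, norm_zg, norm_wg, ← pow_add]
    congr 1
    omega
  have h2 : (pt C a).norm = (pt C a).re ^ 2 + (pt C a).im ^ 2 := by
    simp [Zsqrtd.norm]; ring
  omega

lemma sol_finite (lam : ℕ) : {k : ℤ × ℤ | k.1 ^ 2 + k.2 ^ 2 = (lam : ℤ)}.Finite := by
  apply Set.Finite.subset (Set.finite_Icc ((-(lam : ℤ), -(lam : ℤ))) ((lam : ℤ), (lam : ℤ)))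
  rintro ⟨a, b⟩ h
  simp only [Set.mem_setOf_eq] at h
  have ha : -(lam : ℤ) ≤ a ∧ a ≤ (lam : ℤ) := by constructor <;> nlinarith [sq_nonneg a, sq_nonneg b]
  have hb : -(lam : ℤ) ≤ b ∧ b ≤ (lam : ℤ) := by constructor <;> nlinarith [sq_nonneg a, sq_nonneg b]
  simp [Set.mem_Icc, Prod.le_def, ha.1, ha.2, hb.1, hb.2]

noncomputable def phiMap (I : Finset (ℤ × ℤ)) (T : Finset (ℕ × ℕ)) :
    ((↥I → ℂ)) →ₗ[ℂ] (↥T → ℂ) where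
  toFun v := fun t => ∑ k ∈ I.attach,
    v k * ((Complex.I * (k.1.2 : ℂ)) ^ t.1.2 * (Complex.I * (k.1.1 : ℂ)) ^ t.1.1)
  map_add' v w := by
    funext t
    simp [add_mul, Finset.sum_add_distrib]
  map_smul' c v := by
    funext t
    simp [Finset.mul_sum, mul_assoc]

lemma exists_kernel (I : Finset (ℤ × ℤ)) (T : Finset (ℕ × ℕ)) (h : T.card < I.card) :
    ∃ v : ↥I → ℂ, v ≠ 0 ∧ phiMap I T v = 0 := by
  have hlt : Module.finrank ℂ (↥T → ℂ) < Module.finrank ℂ (↥I → ℂ) := by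
    rw [Module.finrank_fintype_fun_eq_card, Module.finrank_fintype_fun_eq_card]
    simpa using h
  have hker := LinearMap.ker_ne_bot_of_finrank_lt (f := phiMap I T) hlt
  obtain ⟨v, hv, hvne⟩ := Submodule.exists_mem_ne_zero_of_ne_bot hker
  exact ⟨v, hvne, hv⟩

end Stmt9Aux

open Stmt9Aux Complex Finset in
theorem stmt_9 (N : ℕ) (hN : 0 < N) :
    ∃ (lam : ℕ) (I : Finset (ℤ × ℤ)) (μ : ℤ × ℤ → ℂ),
      (∀ k : ℤ × ℤ, k ∈ I ↔ k.1 ^ 2 + k.2 ^ 2 = (lam : ℤ)) ∧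
      (∃ k ∈ I, μ k ≠ 0) ∧
      ∀ α : Fin 2 → ℕ, ∑ i, α i ≤ N →
        Dalpha 2 α
          (fun x => ∑ k ∈ I, μ k *
            Complex.exp (Complex.I * ((k.1 : ℂ) * (x 0 : ℂ) + (k.2 : ℂ) * (x 1 : ℂ)))) 0 = 0 := by
  classical
  set C : ℕ := (N + 1) ^ 2 with hC
  set lam : ℕ := 5 ^ C with hlam
  set I : Finset (ℤ × ℤ) := (sol_finite lam).toFinset with hI
  have hmemI : ∀ k : ℤ × ℤ, k ∈ I ↔ k.1 ^ 2 + k.2 ^ 2 = (lam : ℤ) := by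
    intro k
    rw [hI, Set.Finite.mem_toFinset]
    rfl
  -- lower bound on the number of lattice points
  have hptmem : ∀ a ∈ Finset.range (C + 1), ((pt C a).re, (pt C a).im) ∈ I := by
    intro a ha
    rw [hmemI]
    have := pt_norm C a (by simpa using Nat.lt_succ_iff.mp (Finset.mem_range.mp ha))
    simpa [hlam] using this
  have hcardI : C + 1 ≤ I.card := by
    have hinj : Set.InjOn (fun a => ((pt C a).re, (pt C a).im)) (Finset.range (C + 1)) := by
      intro a ha b hb hab
      apply pt_inj C ha hb
      have h1 := congrArg Prod.fst hab
      have h2 := congrArg Prod.snd hab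
      simp only at h1 h2
      exact Zsqrtd.ext h1 h2
    calc C + 1
        = ((Finset.range (C + 1)).image (fun a => ((pt C a).re, (pt C a).im))).card := by
          rw [Finset.card_image_of_injOn hinj, Finset.card_range]
      _ ≤ I.card := Finset.card_le_card (by
          intro x hx
          obtain ⟨a, ha, rfl⟩ := Finset.mem_image.mp hx
          exact hptmem a ha)
  set T : Finset (ℕ × ℕ) := Finset.range (N + 1) ×ˢ Finset.range (N + 1) with hT
  have hcardT : T.card = (N + 1) ^ 2 := by
    rw [hT, Finset.card_product, Finset.card_range]
    ring
  obtain ⟨v, hv0, hvker⟩ := exists_kernel I T (by omega)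
  set μ : ℤ × ℤ → ℂ := fun k => if h : k ∈ I then v ⟨k, h⟩ else 0 with hμ
  refine ⟨lam, I, μ, hmemI, ?_, ?_⟩
  · obtain ⟨j, hj⟩ := Function.ne_iff.mp hv0
    exact ⟨j.1, j.2, by simpa [hμ, dif_pos j.2] using hj⟩
  · intro α hα
    have hα2 : α 0 + α 1 ≤ N := by simpa [Fin.sum_univ_two] using hα
    have hTmem : ((α 0, α 1) : ℕ × ℕ) ∈ T := by
      rw [hT]
      simp only [Finset.mem_product, Finset.mem_range]
      omega
    -- rewrite the function in the standard form
    have hfun : (fun x : EuclideanSpace ℝ (Fin 2) => ∑ k ∈ I, μ k *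
        Complex.exp (Complex.I * ((k.1 : ℂ) * (x 0 : ℂ) + (k.2 : ℂ) * (x 1 : ℂ))))
        = F I μ (fun k => LL ![Complex.I * (k.1 : ℂ), Complex.I * (k.2 : ℂ)]) := by
      funext x
      refine Finset.sum_congr rfl fun k _ => ?_
      congr 1
      rw [LL_apply]
      simp only [Matrix.cons_val_zero, Matrix.cons_val_one, Matrix.head_cons]
      ring
    rw [hfun, Dalpha_F]
    simp only [LL_single, Matrix.cons_val_zero, Matrix.cons_val_one, Matrix.head_cons]
    have hker := congrFun hvker (⟨(α 0, α 1), hTmem⟩ : ↥T)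
    simp only [phiMap, LinearMap.coe_mk, AddHom.coe_mk, Pi.zero_apply] at hker
    rw [← Finset.sum_attach I (fun k => μ k * (Complex.I * (k.2 : ℂ)) ^ (α 1) *
      (Complex.I * (k.1 : ℂ)) ^ (α 0))]
    rw [← hker]
    refine Finset.sum_congr rfl fun k _ => ?_
    simp only [hμ, dif_pos k.2]
    ring
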